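/- Let μ be the signed measure on [0,∞) with density f(x) = x(1/2 + cos x) with respect to Lebesgue measure. Then its Laplace transform is Ψ_μ(τ) = (3τ⁴ + 1) / (2(τ³ + τ)²) for τ > 0, and Ψ_μ(τ) = 1/(2τ²) + o(1/τ) as τ ↓ 0; in particular τ ↦ Ψ_μ(1/τ) is regularly varying at infinity with index 2. -/

import Mathlib

open MeasureTheory Filter Topology Set Asymptotics
open scoped NNReal ENNReal

private lemma laplace_core (τ : ℝ) (hτ : 0 < τ) :
    ∫ x in Set.Ioi (0 : ℝ), Real.exp (-(τ * x)) * (x * (1 / 2 + Real.cos x))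
      = (3 * τ ^ 4 + 1) / (2 * (τ ^ 3 + τ) ^ 2) := by
  have hτ0 : τ ≠ 0 := hτ.ne'
  set F : ℝ → ℝ := fun x => Real.exp (-(τ*x)) *
      (-(x/τ + 1/τ^2)/2 + (-τ/(τ^2+1))*(x*Real.cos x) + (1/(τ^2+1))*(x*Real.sin x)
        + ((1-τ^2)/(τ^2+1)^2)*Real.cos x + (2*τ/(τ^2+1)^2)*Real.sin x) with hF
  have hder : ∀ x : ℝ, HasDerivAt F (Real.exp (-(τ*x)) * (x * (1/2 + Real.cos x))) x := by
    intro x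
    have he : HasDerivAt (fun x : ℝ => Real.exp (-(τ*x))) (Real.exp (-(τ*x)) * (-τ)) x := by
      have h1 : HasDerivAt (fun x : ℝ => -(τ*x)) (-τ) x := by
        have := ((hasDerivAt_id x).const_mul τ).neg
        rw [mul_one] at this
        exact this
      exact h1.exp
    have hxc : HasDerivAt (fun x : ℝ => x*Real.cos x) (1 * Real.cos x + x * (-Real.sin x)) x :=
      (hasDerivAt_id x).mul (Real.hasDerivAt_cos x)
    have hxs : HasDerivAt (fun x : ℝ => x*Real.sin x) (1 * Real.sin x + x * (Real.cos x)) x :=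
      (hasDerivAt_id x).mul (Real.hasDerivAt_sin x)
    have hlin : HasDerivAt (fun x : ℝ => -(x/τ + 1/τ^2)/2) (-(1/τ)/2) x := by
      have := (((hasDerivAt_id x).div_const τ).add_const (1/τ^2)).neg.div_const 2
      simpa using this
    have hP := (((hlin.add (hxc.const_mul (-τ/(τ^2+1)))).add
        (hxs.const_mul (1/(τ^2+1)))).add
        ((Real.hasDerivAt_cos x).const_mul ((1-τ^2)/(τ^2+1)^2))).add
        ((Real.hasDerivAt_sin x).const_mul (2*τ/(τ^2+1)^2))
    have hFd := he.mul hP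
    rw [hF]
    refine HasDerivAt.congr_deriv hFd ?_
    simp only [Pi.add_apply]
    have hd : (τ^2+1) ≠ 0 := by positivity
    field_simp
    ring
  have hcont : ContinuousWithinAt F (Set.Ici 0) 0 :=
    (hder 0).continuousAt.continuousWithinAt
  have hint : IntegrableOn (fun x => Real.exp (-(τ*x)) * (x*(1/2+Real.cos x))) (Set.Ioi 0) := by
    have hg : IntegrableOn (fun x => (3/τ) * Real.exp (-(τ/2) * x)) (Set.Ioi 0) :=
      (exp_neg_integrableOn_Ioi 0 (half_pos hτ)).const_mul _
    refine Integrable.mono' hg ?_ ?_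
    · exact (Continuous.mul (by fun_prop) (by fun_prop)).aestronglyMeasurable
    · filter_upwards [ae_restrict_mem measurableSet_Ioi] with x hx
      have hx0 : (0:ℝ) < x := hx
      have key : (τ/2)*x ≤ Real.exp ((τ/2)*x) :=
        le_trans (by linarith [Real.add_one_le_exp ((τ/2)*x)]) le_rfl
      have key' : (τ/2)*x + 1 ≤ Real.exp ((τ/2)*x) + 1 := by
        linarith [Real.add_one_le_exp ((τ/2)*x)]
      have hxe : x * Real.exp (-((τ/2)*x)) ≤ 2/τ := by
        rw [Real.exp_neg]
        rw [mul_inv_le_iff₀ (Real.exp_pos _), mul_comm (2/τ)]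
        have h2 := mul_le_mul_of_nonneg_right key (by positivity : (0:ℝ) ≤ 2/τ)
        calc x = (τ/2*x) * (2/τ) := by field_simp; try ring
        _ ≤ Real.exp ((τ/2)*x) * (2/τ) := h2
      have hcb : |1/2 + Real.cos x| ≤ 3/2 := by
        have := Real.neg_one_le_cos x
        have := Real.cos_le_one x
        rw [abs_le]; constructor <;> linarith
      have hsplit : Real.exp (-(τ*x)) = Real.exp (-((τ/2)*x)) * Real.exp (-((τ/2)*x)) := by
        rw [← Real.exp_add]; ring_nf
      rw [Real.norm_eq_abs, abs_mul, Real.abs_exp, abs_mul, abs_of_pos hx0]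
      calc Real.exp (-(τ*x)) * (x * |1/2 + Real.cos x|)
          ≤ Real.exp (-(τ*x)) * (x * (3/2)) := by
            apply mul_le_mul_of_nonneg_left _ (Real.exp_pos _).le
            exact mul_le_mul_of_nonneg_left hcb hx0.le
        _ = (3/2) * (x * Real.exp (-((τ/2)*x))) * Real.exp (-((τ/2)*x)) := by
            rw [hsplit]; ring
        _ ≤ (3/2) * (2/τ) * Real.exp (-((τ/2)*x)) := by
            apply mul_le_mul_of_nonneg_right _ (Real.exp_pos _).le
            exact mul_le_mul_of_nonneg_left hxe (by norm_num)
        _ = (3/τ) * Real.exp (-(τ/2) * x) := by rw [neg_mul]; field_simp; try ring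
  have hE : Tendsto (fun x : ℝ => Real.exp (-(τ*x))) atTop (𝓝 0) := by
    have h2 : Tendsto (fun x : ℝ => -(τ * x)) atTop atBot :=
      tendsto_neg_atTop_atBot.comp (Tendsto.const_mul_atTop hτ tendsto_id)
    exact Real.tendsto_exp_atBot.comp h2
  have hXE : Tendsto (fun x : ℝ => x * Real.exp (-(τ*x))) atTop (𝓝 0) := by
    have h1 := Real.tendsto_pow_mul_exp_neg_atTop_nhds_zero 1
    have h2 : Tendsto (fun x : ℝ => τ * x) atTop atTop := Tendsto.const_mul_atTop hτ tendsto_id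
    have h3 := h1.comp h2
    have h5 : Tendsto (fun x : ℝ => (1/τ) * ((τ*x)^1 * Real.exp (-(τ*x)))) atTop (𝓝 0) := by
      simpa using h3.const_mul (1/τ)
    refine h5.congr fun x => ?_
    rw [pow_one]; field_simp; try ring
  have hbc : IsBoundedUnder (· ≤ ·) atTop (fun x => ‖Real.cos x‖) :=
    isBoundedUnder_of ⟨1, fun x => by simpa using Real.abs_cos_le_one x⟩
  have hbs : IsBoundedUnder (· ≤ ·) atTop (fun x => ‖Real.sin x‖) :=
    isBoundedUnder_of ⟨1, fun x => by simpa using Real.abs_sin_le_one x⟩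
  have t3 : Tendsto (fun x : ℝ => (x*Real.exp (-(τ*x))) * Real.cos x) atTop (𝓝 0) :=
    hXE.zero_mul_isBoundedUnder_le hbc
  have t4 : Tendsto (fun x : ℝ => (x*Real.exp (-(τ*x))) * Real.sin x) atTop (𝓝 0) :=
    hXE.zero_mul_isBoundedUnder_le hbs
  have t5 : Tendsto (fun x : ℝ => (Real.exp (-(τ*x))) * Real.cos x) atTop (𝓝 0) :=
    hE.zero_mul_isBoundedUnder_le hbc
  have t6 : Tendsto (fun x : ℝ => (Real.exp (-(τ*x))) * Real.sin x) atTop (𝓝 0) :=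
    hE.zero_mul_isBoundedUnder_le hbs
  have hlim : Tendsto F atTop (𝓝 0) := by
    have hsum := (((((hXE.const_mul (-(1/(2*τ)))).add (hE.const_mul (-(1/(2*τ^2))))).add
        (t3.const_mul (-τ/(τ^2+1)))).add (t4.const_mul (1/(τ^2+1)))).add
        (t5.const_mul ((1-τ^2)/(τ^2+1)^2))).add (t6.const_mul (2*τ/(τ^2+1)^2))
    simp only [mul_zero, add_zero] at hsum
    refine hsum.congr fun x => ?_
    rw [hF]; ring
  have hFTC := integral_Ioi_of_hasDerivAt_of_tendsto hcont (fun x _ => hder x) hint hlim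
  rw [hFTC, hF]
  simp only [mul_zero, neg_zero, Real.exp_zero, Real.cos_zero, Real.sin_zero]
  have hd : (τ^2+1) ≠ 0 := by positivity
  field_simp
  ring

/-- for the signed measure on `[0,∞)` with density
`f(x) = x (1/2 + cos x)` w.r.t. Lebesgue measure, the Laplace transform satisfies
`Ψ_μ(τ) = (3τ⁴ + 1)/(2 (τ³ + τ)²)` for `τ > 0`, `Ψ_μ(τ) = 1/(2τ²) + o(1/τ)` as `τ ↓ 0`,
and `τ ↦ Ψ_μ(1/τ)` is regularly varying at infinity with index `2`. -/
theorem laplace_of_cosine_density (Ψ : ℝ → ℝ)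
    (hΨ : ∀ τ : ℝ, Ψ τ =
      ∫ x in Set.Ioi (0 : ℝ), Real.exp (-(τ * x)) * (x * (1 / 2 + Real.cos x))) :
    (∀ τ : ℝ, 0 < τ → Ψ τ = (3 * τ ^ 4 + 1) / (2 * (τ ^ 3 + τ) ^ 2)) ∧
    (fun τ : ℝ => Ψ τ - 1 / (2 * τ ^ 2)) =o[𝓝[>] (0 : ℝ)] (fun τ : ℝ => 1 / τ) ∧
    (∀ x : ℝ, 0 < x →
      Tendsto (fun t : ℝ => Ψ (1 / (t * x)) / Ψ (1 / t)) atTop (𝓝 (x ^ (2 : ℝ)))) := by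
  have main : ∀ τ : ℝ, 0 < τ → Ψ τ = (3 * τ ^ 4 + 1) / (2 * (τ ^ 3 + τ) ^ 2) := by
    intro τ hτ
    rw [hΨ τ]
    exact laplace_core τ hτ
  refine ⟨main, ?_, ?_⟩
  · rw [isLittleO_iff]
    intro ε hε
    filter_upwards [Ioo_mem_nhdsGT (lt_min hε zero_lt_one : (0:ℝ) < min ε 1)]
      with τ hτ
    obtain ⟨h0, h1⟩ := hτ
    have hτε : τ < ε := lt_of_lt_of_le h1 (min_le_left _ _)
    have hτ1 : τ < 1 := lt_of_lt_of_le h1 (min_le_right _ _)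
    have hτ0 : τ ≠ 0 := h0.ne'
    have hd : (τ^2+1 : ℝ) ≠ 0 := by positivity
    rw [main τ h0]
    have heq : (3*τ^4+1)/(2*(τ^3+τ)^2) - 1/(2*τ^2) = (τ^2-1)/(τ^2+1)^2 := by
      field_simp
      ring
    rw [heq]
    have hb : ‖(τ^2-1)/(τ^2+1)^2‖ ≤ 1 := by
      rw [Real.norm_eq_abs, abs_div, abs_of_nonneg (by positivity : (0:ℝ) ≤ (τ^2+1)^2)]
      rw [div_le_one (by positivity)]
      rw [abs_le]
      constructor <;> nlinarith
    have hg : (1:ℝ) ≤ ε * ‖1/τ‖ := by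
      rw [Real.norm_eq_abs, abs_of_pos (by positivity : (0:ℝ) < 1/τ), mul_one_div,
        le_div_iff₀ h0, one_mul]
      exact hτε.le
    linarith
  · intro x hx
    have hx0 : x ≠ 0 := hx.ne'
    have hrpow : (x : ℝ) ^ (2:ℝ) = x^2 := by
      rw [show (2:ℝ) = ((2:ℕ):ℝ) by norm_num, Real.rpow_natCast]
    rw [hrpow]
    have hc : Tendsto (fun u : ℝ => x^2*(3*u^4+x^4)*(u^2+1)^2 / ((3*u^4+1)*(u^2+x^2)^2))
        (𝓝 0) (𝓝 (x^2)) := by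
      have hca : ContinuousAt (fun u : ℝ => x^2*(3*u^4+x^4)*(u^2+1)^2 / ((3*u^4+1)*(u^2+x^2)^2)) 0 := by
        apply ContinuousAt.div
        · fun_prop
        · fun_prop
        · norm_num
          positivity
      have h0 : x ^ 2 * x ^ 4 / (x ^ 2) ^ 2 = x ^ 2 := by
        field_simp
      simpa [h0] using hca.tendsto
    have hcomp := hc.comp tendsto_inv_atTop_zero
    refine Tendsto.congr' ?_ hcomp
    filter_upwards [eventually_gt_atTop 0] with t ht
    simp only [Function.comp_apply]
    have ht0 : t ≠ 0 := ht.ne'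
    have htx : (0:ℝ) < t*x := mul_pos ht hx
    have h1t : (0:ℝ) < 1/t := by positivity
    have h1tx : (0:ℝ) < 1/(t*x) := by positivity
    rw [main _ h1tx, main _ h1t]
    have hA : ((1/(t*x))^3 + 1/(t*x) : ℝ) ≠ 0 := by positivity
    have hB : ((1/t)^3 + 1/t : ℝ) ≠ 0 := by positivity
    have hC : (3*(1/t)^4 + 1 : ℝ) ≠ 0 := by positivity
    have hD : (3*(1/(t*x))^4 + 1 : ℝ) ≠ 0 := by positivity
    have hE2 : ((t:ℝ)⁻¹^2 + x^2 : ℝ) ≠ 0 := by positivity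
    have hC' : (3*(t:ℝ)⁻¹^4 + 1 : ℝ) ≠ 0 := by positivity
    field_simp
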